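/- Let V be a complex vector space and ω : V × V → ℂ a skew-Hermitian sesquilinear form. Let f_1,…,f_n, g_1,…,g_n ∈ V satisfy the Jost relations with parameter 1 (so ω(f_i,f_j) = 2i·δ_{ij}, ω(g_i,g_j) = −2i·δ_{ij}, ω(f_i,g_j) = 0 = ω(g_i,f_j)). Let S be an n×n unitary matrix, and define ψ_i = (1/2)( Σ_j S_{ij} f_j + g_i ) and χ_i = (1/(2i))( Σ_j S_{ij} f_j − g_i ) for i = 1,…,n. Then {ψ_1,…,ψ_n, χ_1,…,χ_n} is a canonical basis configuration: ω(ψ_i, ψ_j) = 0 = ω(χ_i, χ_j), ω(ψ_i, χ_j) = δ_{ij}, and ω(χ_i, ψ_j) = −δ_{ij} for all i, j. Moreover, for each i one has ψ_i = Σ_j [ (1/2)(S + I)_{ij} p_j + (1/2)(i(S − I))_{ij} q_j ] where p_j = (f_j + g_j)/2 and q_j = (f_j − g_j)/(2i). -/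

import Mathlib

open Complex

/-- The scattering matrix as parameter of the Lagrange plane: for a unitary
`S`, the vectors `ψ i = (1/2)(∑ j, S i j • f j + g i)` and
`χ i = (1/(2i))(∑ j, S i j • f j - g i)` built from Jost solutions (parameter
`k = 1`) form a canonical basis configuration, and the `ψ i` are obtained from
the canonical basis `p j = (f j + g j)/2`, `q j = (f j - g j)/(2i)` by the
hermitian symplectic transformation with blocks `(S+I)/2` and `i(S-I)/2`. -/
theorem scattering_matrix_parametrises_lagrange_plane
    {V : Type*} [AddCommGroup V] [Module ℂ V]
    (ω : V →ₗ⋆[ℂ] V →ₗ[ℂ] ℂ)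
    (hskew : ∀ x y : V, (starRingEnd ℂ) (ω x y) = - ω y x)
    (n : ℕ) (f g : Fin n → V)
    (hff : ∀ i j, ω (f i) (f j) = 2 * Complex.I * (if i = j then 1 else 0))
    (hgg : ∀ i j, ω (g i) (g j) = -(2 * Complex.I * (if i = j then 1 else 0)))
    (hfg : ∀ i j, ω (f i) (g j) = 0)
    (hgf : ∀ i j, ω (g i) (f j) = 0)
    (S : Matrix (Fin n) (Fin n) ℂ) (hS : S ∈ Matrix.unitaryGroup (Fin n) ℂ)
    (ψ χ : Fin n → V)
    (hψ : ∀ i, ψ i = ((1 : ℂ)/2) • ((∑ j, S i j • f j) + g i))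
    (hχ : ∀ i, χ i = (1/(2 * Complex.I)) • ((∑ j, S i j • f j) - g i)) :
    (∀ i j, ω (ψ i) (ψ j) = 0) ∧
    (∀ i j, ω (χ i) (χ j) = 0) ∧
    (∀ i j, ω (ψ i) (χ j) = if i = j then 1 else 0) ∧
    (∀ i j, ω (χ i) (ψ j) = -(if i = j then 1 else 0)) ∧
    (∀ i, ψ i =
      ∑ j, ((((1 : ℂ)/2) * ((S + 1) i j)) • (((1 : ℂ)/2) • (f j + g j)) +
            (((1 : ℂ)/2) * (Complex.I * ((S - 1) i j))) •
              ((1/(2 * Complex.I)) • (f j - g j)))) := by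
  have hSS : ∀ i j : Fin n, ∑ k, (starRingEnd ℂ) (S i k) * S j k = if i = j then 1 else 0 := by
    intro i j
    have h := (Matrix.mem_unitaryGroup_iff.mp hS)
    have h2 := congrFun (congrFun h j) i
    simp [Matrix.mul_apply, Matrix.one_apply, Matrix.star_apply] at h2
    calc ∑ k, (starRingEnd ℂ) (S i k) * S j k = ∑ x : Fin n, S j x * (starRingEnd ℂ) (S i x) := by
          exact Finset.sum_congr rfl (fun k _ => mul_comm _ _)
      _ = if i = j then 1 else 0 := by rw [h2]; simp [eq_comm]
  have key : ∀ i j, ω (∑ k, S i k • f k) (∑ l, S j l • f l)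
      = 2 * Complex.I * (if i = j then 1 else 0) := by
    intro i j
    simp only [map_sum, map_smulₛₗ, LinearMap.sum_apply, LinearMap.smul_apply, map_smul,
      smul_eq_mul, hff, RingHom.id_apply]
    have h1 : ∀ l, ∑ k, (starRingEnd ℂ) (S i k) * (2 * Complex.I * if k = l then 1 else 0)
        = (starRingEnd ℂ) (S i l) * (2*Complex.I) := by
      intro l
      rw [Finset.sum_eq_single l] <;> intros <;> simp_all
    simp only [h1]
    have h2 : ∑ l, S j l * ((starRingEnd ℂ) (S i l) * (2*Complex.I))
        = (∑ l, (starRingEnd ℂ) (S i l) * S j l) * (2*Complex.I) := by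
      rw [Finset.sum_mul]; exact Finset.sum_congr rfl (fun l _ => by ring)
    rw [h2, hSS]; ring
  have kfg : ∀ i j, ω (∑ k, S i k • f k) (g j) = 0 := by
    intro i j
    simp [map_sum, map_smulₛₗ, LinearMap.sum_apply, LinearMap.smul_apply, hfg]
  have kgf : ∀ i j, ω (g i) (∑ l, S j l • f l) = 0 := by
    intro i j
    simp [map_sum, map_smul, hgf]
  refine ⟨fun i j => ?_, fun i j => ?_, fun i j => ?_, fun i j => ?_, fun i => ?_⟩
  · simp only [hψ, map_smulₛₗ, map_add, map_smul, LinearMap.add_apply, LinearMap.smul_apply,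
      smul_eq_mul, key, kfg, kgf, hgg, RingHom.id_apply]
    have : (starRingEnd ℂ) ((1:ℂ)/2) = 1/2 := by simp [map_div₀, Complex.conj_ofNat]
    rw [this]; field_simp; ring
  · simp only [hχ, map_smulₛₗ, map_sub, map_smul, LinearMap.sub_apply, LinearMap.smul_apply,
      smul_eq_mul, key, kfg, kgf, hgg, RingHom.id_apply]
    have : (starRingEnd ℂ) ((1:ℂ)/(2*Complex.I)) = -(1/(2*Complex.I)) := by
      simp [map_div₀, Complex.conj_ofNat]
    rw [this]
    field_simp
    ring
  · simp only [hψ, hχ, map_smulₛₗ, map_add, map_sub, map_smul, LinearMap.add_apply,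
      LinearMap.sub_apply, LinearMap.smul_apply, smul_eq_mul, key, kfg, kgf, hgg, RingHom.id_apply]
    have : (starRingEnd ℂ) ((1:ℂ)/2) = 1/2 := by simp [map_div₀, Complex.conj_ofNat]
    rw [this]
    field_simp
    split_ifs <;> ring
  · simp only [hψ, hχ, map_smulₛₗ, map_add, map_sub, map_smul, LinearMap.add_apply,
      LinearMap.sub_apply, LinearMap.smul_apply, smul_eq_mul, key, kfg, kgf, hgg, RingHom.id_apply]
    have : (starRingEnd ℂ) ((1:ℂ)/(2*Complex.I)) = -(1/(2*Complex.I)) := by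
      simp [map_div₀, Complex.conj_ofNat]
    rw [this]
    field_simp
    split_ifs <;> ring
  · have term : ∀ j, (((1 : ℂ)/2) * ((S + 1) i j)) • (((1 : ℂ)/2) • (f j + g j)) +
            (((1 : ℂ)/2) * (Complex.I * ((S - 1) i j))) •
              ((1/(2 * Complex.I)) • (f j - g j))
        = (((1:ℂ)/2) * S i j) • f j + (((1:ℂ)/2) * (if i = j then 1 else 0)) • g j := by
      intro j
      simp only [Matrix.add_apply, Matrix.sub_apply, Matrix.one_apply, smul_smul,
        smul_add, smul_sub]
      match_scalars <;> field_simp <;> split_ifs <;> ring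
    rw [Finset.sum_congr rfl (fun j _ => term j), Finset.sum_add_distrib]
    have h1 : ∑ j, (((1:ℂ)/2) * (if i = j then 1 else 0)) • g j = ((1:ℂ)/2) • g i := by
      rw [Finset.sum_eq_single i]
      · simp
      · intro b _ hb; simp [Ne.symm hb]
      · simp
    rw [h1, hψ i, smul_add, Finset.smul_sum]
    congr 1
    exact Finset.sum_congr rfl (fun j _ => by rw [smul_smul])
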